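/- Let m ≥ 0, set N = 2m+1, and let z_1,…,z_N be complex numbers such that e^{iz_1},…,e^{iz_N} are pairwise distinct. If f(z) = a_0 + Σ_{k=1}^m (a_k cos kz + b_k sin kz) is a trigonometric polynomial of degree at most m with complex coefficients, then for every z ∈ ℂ, f(z) = Σ_{j=1}^N f(z_j) · ∏_{k≠j} sin((z − z_k)/2) / ∏_{k≠j} sin((z_j − z_k)/2) (the Gauss trigonometric interpolation formula is exact on trigonometric polynomials of degree at most m). -/
import Mathlib
open Finset Polynomial

noncomputable def trigPoly (m : ℕ) (a b : ℕ → ℂ) : Polynomial ℂ :=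
  C (a 0) * X ^ m + ∑ k ∈ Finset.Icc 1 m,
    (C ((a k - Complex.I * b k)/2) * X ^ (m + k)
     + C ((a k + Complex.I * b k)/2) * X ^ (m - k))

lemma sin_half_eq (x u : ℂ) :
    Complex.sin ((x - u) / 2) =
      (Complex.exp (Complex.I*x) - Complex.exp (Complex.I*u)) *
        (Complex.exp (-(Complex.I*(x+u))/2) * (2*Complex.I)⁻¹) := by
  rw [Complex.sin,
    show Complex.I*x = (x-u)/2*Complex.I + (Complex.I*(x+u))/2 by ring,
    show Complex.I*u = -((x-u)/2)*Complex.I + (Complex.I*(x+u))/2 by ring,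
    Complex.exp_add, Complex.exp_add,
    show -(Complex.I*(x+u))/2 = -((Complex.I*(x+u))/2) by ring, Complex.exp_neg,
    show (2*Complex.I)⁻¹ = -Complex.I/2 by rw [mul_inv, Complex.inv_I]; ring]
  have hc : Complex.exp ((Complex.I*(x+u))/2) * (Complex.exp ((Complex.I*(x+u))/2))⁻¹ = 1 :=
    mul_inv_cancel₀ (Complex.exp_ne_zero _)
  linear_combination (Complex.exp ((x-u)/2*Complex.I) - Complex.exp (-((x-u)/2)*Complex.I)) * (Complex.I/2) * hc

lemma sin_ratio (x y u : ℂ) :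
    Complex.sin ((x-u)/2) / Complex.sin ((y-u)/2) =
      Complex.exp (-(Complex.I*(x-y))/2) *
        ((Complex.exp (Complex.I*x) - Complex.exp (Complex.I*u)) /
         (Complex.exp (Complex.I*y) - Complex.exp (Complex.I*u))) := by
  rw [sin_half_eq x u, sin_half_eq y u, mul_div_mul_comm, mul_div_mul_comm,
    div_self (inv_ne_zero (mul_ne_zero two_ne_zero Complex.I_ne_zero)), mul_one,
    ← Complex.exp_sub, show -(Complex.I*(x+u))/2 - -(Complex.I*(y+u))/2 = -(Complex.I*(x-y))/2 by ring,
    mul_comm]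

lemma trigPoly_degree_lt (m : ℕ) (a b : ℕ → ℂ) :
    (trigPoly m a b).degree < (2*m+1 : ℕ) := by
  have h2m : ((2*m : ℕ) : WithBot ℕ) < ((2*m+1 : ℕ) : WithBot ℕ) := by
    exact_mod_cast Nat.lt_succ_self _
  refine lt_of_le_of_lt ?_ h2m
  refine le_trans (degree_add_le _ _) (max_le ?_ ?_)
  · exact le_trans (degree_C_mul_X_pow_le _ _) (by exact_mod_cast Nat.le_of_lt_succ (by omega))
  · refine le_trans (degree_sum_le _ _) (Finset.sup_le fun k hk => ?_)
    have hk' : k ≤ m := (Finset.mem_Icc.mp hk).2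
    refine le_trans (degree_add_le _ _) (max_le ?_ ?_)
    · exact le_trans (degree_C_mul_X_pow_le _ _) (by exact_mod_cast (by omega : m + k ≤ 2*m))
    · exact le_trans (degree_C_mul_X_pow_le _ _) (by exact_mod_cast (by omega : m - k ≤ 2*m))

lemma trigPoly_eval (m : ℕ) (a b : ℕ → ℂ) (t : ℂ) :
    (trigPoly m a b).eval (Complex.exp (Complex.I * t)) =
      Complex.exp (Complex.I * m * t) *
        (a 0 + ∑ k ∈ Finset.Icc 1 m,
          (a k * Complex.cos (k*t) + b k * Complex.sin (k*t))) := by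
  have hpow : ∀ n : ℕ, Complex.exp (Complex.I * t) ^ n = Complex.exp (Complex.I * n * t) := by
    intro n
    rw [← Complex.exp_nat_mul]
    congr 1; ring
  simp only [trigPoly, eval_add, eval_mul, eval_pow, eval_C, eval_X, eval_finset_sum, mul_add,
    Finset.mul_sum, hpow]
  congr 1
  · rw [mul_comm]
  · refine Finset.sum_congr rfl fun k hk => ?_
    have hk' : k ≤ m := (Finset.mem_Icc.mp hk).2
    have h1 : ((m + k : ℕ) : ℂ) = (m : ℂ) + k := by push_cast; ring
    have h2 : ((m - k : ℕ) : ℂ) = (m : ℂ) - k := by push_cast [Nat.cast_sub hk']; ring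
    rw [h1, h2,
      show Complex.I * ((m:ℂ)+k) * t = Complex.I*m*t + Complex.I*k*t by ring,
      show Complex.I * ((m:ℂ)-k) * t = Complex.I*m*t - Complex.I*k*t by ring,
      Complex.exp_add, Complex.exp_sub, Complex.cos, Complex.sin,
      show -((k:ℂ)*t)*Complex.I = -(Complex.I*k*t) by ring,
      show ((k:ℂ)*t)*Complex.I = Complex.I*k*t by ring, Complex.exp_neg]
    have hE : Complex.exp (Complex.I*k*t) ≠ 0 := Complex.exp_ne_zero _
    field_simp
    ring_nf

/-- Gauss trigonometric interpolation is exact on trigonometric polynomials of degree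
at most `m`, using `N = 2m+1` nodes whose exponentials `e^{iz_k}` are pairwise
distinct. -/
theorem gauss_trig_interpolation_exact (m : ℕ) (zs : Fin (2 * m + 1) → ℂ)
    (hz : Function.Injective fun k => Complex.exp (Complex.I * zs k))
    (a b : ℕ → ℂ) (z : ℂ) :
    a 0 + ∑ k ∈ Finset.Icc 1 m,
        (a k * Complex.cos (k * z) + b k * Complex.sin (k * z)) =
      ∑ j, (a 0 + ∑ k ∈ Finset.Icc 1 m,
          (a k * Complex.cos (k * zs j) + b k * Complex.sin (k * zs j))) *
        ((∏ k ∈ Finset.univ.erase j, Complex.sin ((z - zs k) / 2)) /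
          (∏ k ∈ Finset.univ.erase j, Complex.sin ((zs j - zs k) / 2))) := by
  classical
  set v : Fin (2*m+1) → ℂ := fun j => Complex.exp (Complex.I * zs j) with hv
  set w : ℂ := Complex.exp (Complex.I * z) with hw
  set P : Polynomial ℂ := trigPoly m a b with hP
  have hvs : Set.InjOn v (Finset.univ : Finset (Fin (2*m+1))) := fun i _ j _ h => hz h
  have hdeg : P.degree < (#(Finset.univ : Finset (Fin (2*m+1))) : ℕ) := by
    simpa using trigPoly_degree_lt m a b
  have hint := Lagrange.eq_interpolate hvs hdeg
  have hEval : P.eval w = ∑ j, P.eval (v j) *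
      ∏ k ∈ Finset.univ.erase j, ((v j - v k)⁻¹ * (w - v k)) := by
    conv_lhs => rw [hint]
    rw [Lagrange.interpolate_apply]
    simp [Lagrange.basis, Lagrange.basisDivisor, eval_finset_sum, eval_prod]
  have hcard : ∀ j : Fin (2*m+1), #(Finset.univ.erase j) = 2*m := by
    intro j
    rw [Finset.card_erase_of_mem (Finset.mem_univ j), Finset.card_univ, Fintype.card_fin]; omega
  have key : ∀ j : Fin (2*m+1),
      (a 0 + ∑ k ∈ Finset.Icc 1 m,
          (a k * Complex.cos (k * zs j) + b k * Complex.sin (k * zs j))) *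
        ((∏ k ∈ Finset.univ.erase j, Complex.sin ((z - zs k) / 2)) /
          (∏ k ∈ Finset.univ.erase j, Complex.sin ((zs j - zs k) / 2))) =
      Complex.exp (-(Complex.I*m*z)) * (P.eval (v j) *
        ∏ k ∈ Finset.univ.erase j, ((v j - v k)⁻¹ * (w - v k))) := by
    intro j
    have hratio : (∏ k ∈ Finset.univ.erase j, Complex.sin ((z - zs k) / 2)) /
          (∏ k ∈ Finset.univ.erase j, Complex.sin ((zs j - zs k) / 2)) =
        Complex.exp (-(Complex.I*m*z)) * Complex.exp (Complex.I*m*zs j) *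
          ∏ k ∈ Finset.univ.erase j, ((v j - v k)⁻¹ * (w - v k)) := by
      rw [← Finset.prod_div_distrib]
      rw [Finset.prod_congr rfl (fun k _ => sin_ratio z (zs j) (zs k))]
      rw [Finset.prod_mul_distrib, Finset.prod_const, hcard j,
        ← Complex.exp_nat_mul,
        show ((2*m : ℕ) : ℂ) * (-(Complex.I*(z - zs j))/2) =
          -(Complex.I*m*z) + Complex.I*m*zs j by push_cast; ring,
        Complex.exp_add]
      congr 1
      refine Finset.prod_congr rfl fun k _ => ?_
      rw [div_eq_mul_inv, mul_comm]
    have heval : Complex.exp (Complex.I*m*zs j) *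
        (a 0 + ∑ k ∈ Finset.Icc 1 m,
          (a k * Complex.cos (k * zs j) + b k * Complex.sin (k * zs j))) = P.eval (v j) :=
      (trigPoly_eval m a b (zs j)).symm
    rw [hratio]
    rw [← heval]
    ring
  rw [Finset.sum_congr rfl (fun j _ => key j), ← Finset.mul_sum, ← hEval,
    show P.eval w = Complex.exp (Complex.I*m*z) * (a 0 + ∑ k ∈ Finset.Icc 1 m,
        (a k * Complex.cos (k * z) + b k * Complex.sin (k * z))) from trigPoly_eval m a b z,
    ← mul_assoc, ← Complex.exp_add]
  simp
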